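/- Let n ≥ 1, s > 0 and C₀ > 0. Let k : ℝⁿ → ℂ be a measurable function satisfying |k(x)| ≤ C₀ s^{−n/2} (s^{−1/2}|x|)^{−n−1} for all x with |x| ≥ s^{1/2}. Then there exists a constant C, depending only on n and C₀, such that for all Borel sets E, Ẽ ⊆ ℝⁿ with dist(E,Ẽ) ≥ s^{1/2} and all f ∈ L²(ℝⁿ): ess sup_{x ∈ E} | ∫_{ℝⁿ} k(x−y) 1_Ẽ(y) f(y) dy | ≤ C s^{−n/4} (s^{−1/2} dist(E,Ẽ))^{−n/2−1} ‖f‖_{L²(ℝⁿ)}. (That is, the pointwise kernel decay implies L²–L^∞ off-diagonal estimates.) -/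

import Mathlib

open MeasureTheory Real ENNReal
open scoped ENNReal NNReal FourierTransform RealInnerProductSpace

noncomputable section

/-- `ℝⁿ` with the Euclidean norm. -/
abbrev Rn (n : ℕ) := EuclideanSpace ℝ (Fin n)
/-- `ℂⁿ` with the Euclidean norm. -/
abbrev Cn (n : ℕ) := EuclideanSpace ℂ (Fin n)
/-- `ℂⁿ ⊗ ℂⁿ` (i.e. `n × n` complex matrices) with the Frobenius norm. -/
abbrev Mn (n : ℕ) := EuclideanSpace ℂ (Fin n × Fin n)

instance (n : ℕ) : MeasurableSpace (Cn n) := borel _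
instance (n : ℕ) : BorelSpace (Cn n) := ⟨rfl⟩
instance (n : ℕ) : MeasurableSpace (Mn n) := borel _
instance (n : ℕ) : BorelSpace (Mn n) := ⟨rfl⟩

/-- The (extended real valued) distance between two sets. -/
def setEDist {X : Type*} [PseudoEMetricSpace X] (E F : Set X) : ℝ≥0∞ :=
  ⨅ (x ∈ E) (y ∈ F), edist x y

lemma aux_F1_meas (n : ℕ) (d : ℝ) : Measurable (fun z : Rn n =>
    Set.indicator {z : Rn n | d ≤ ‖z‖} (fun z => ENNReal.ofReal (‖z‖ ^ (-(2*(n:ℝ)+2)))) z) := by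
  apply Measurable.indicator
  · fun_prop
  · exact measurableSet_le measurable_const measurable_norm

lemma aux_I_lt_top (n : ℕ) :
    (∫⁻ z : Rn n, Set.indicator {z : Rn n | 1 ≤ ‖z‖}
      (fun z => ENNReal.ofReal (‖z‖ ^ (-(2*(n:ℝ)+2)))) z) < ∞ := by
  have hbd : ∀ z : Rn n, Set.indicator {z : Rn n | 1 ≤ ‖z‖}
      (fun z => ENNReal.ofReal (‖z‖ ^ (-(2*(n:ℝ)+2)))) z
      ≤ ENNReal.ofReal ((2:ℝ) ^ (2*(n:ℝ)+2)) * ENNReal.ofReal ((1 + ‖z‖) ^ (-(2*(n:ℝ)+2))) := by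
    intro z
    by_cases hz : z ∈ {z : Rn n | 1 ≤ ‖z‖}
    · rw [Set.indicator_of_mem hz]
      have hz1 : (1:ℝ) ≤ ‖z‖ := hz
      have hz0 : (0:ℝ) < ‖z‖ := lt_of_lt_of_le one_pos hz1
      rw [← ENNReal.ofReal_mul (by positivity)]
      apply ENNReal.ofReal_le_ofReal
      have h1 : ((2:ℝ) * ‖z‖) ^ (-(2*(n:ℝ)+2)) ≤ (1 + ‖z‖) ^ (-(2*(n:ℝ)+2)) := by
        have hc : (0:ℝ) ≤ (n:ℝ) := Nat.cast_nonneg n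
        apply Real.rpow_le_rpow_of_nonpos (by linarith) (by linarith) (by linarith)
      have h2 : ((2:ℝ) * ‖z‖) ^ (-(2*(n:ℝ)+2)) = (2:ℝ) ^ (-(2*(n:ℝ)+2)) * ‖z‖ ^ (-(2*(n:ℝ)+2)) :=
        Real.mul_rpow (by norm_num) hz0.le
      have h3 : (2:ℝ) ^ (2*(n:ℝ)+2) * (2:ℝ) ^ (-(2*(n:ℝ)+2)) = 1 := by
        rw [← Real.rpow_add two_pos, show (2*(n:ℝ)+2) + -(2*(n:ℝ)+2) = 0 by ring, Real.rpow_zero]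
      calc ‖z‖ ^ (-(2*(n:ℝ)+2))
          = (2:ℝ) ^ (2*(n:ℝ)+2) * ((2:ℝ) * ‖z‖) ^ (-(2*(n:ℝ)+2)) := by
            rw [h2, ← mul_assoc, h3, one_mul]
        _ ≤ (2:ℝ) ^ (2*(n:ℝ)+2) * (1 + ‖z‖) ^ (-(2*(n:ℝ)+2)) := by
            exact mul_le_mul_of_nonneg_left h1 (by positivity)
    · rw [Set.indicator_of_notMem hz]; exact zero_le
  calc (∫⁻ z : Rn n, Set.indicator {z : Rn n | 1 ≤ ‖z‖}
      (fun z => ENNReal.ofReal (‖z‖ ^ (-(2*(n:ℝ)+2)))) z)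
      ≤ ∫⁻ z : Rn n, ENNReal.ofReal ((2:ℝ) ^ (2*(n:ℝ)+2)) *
          ENNReal.ofReal ((1 + ‖z‖) ^ (-(2*(n:ℝ)+2))) := lintegral_mono hbd
    _ = ENNReal.ofReal ((2:ℝ) ^ (2*(n:ℝ)+2)) *
          ∫⁻ z : Rn n, ENNReal.ofReal ((1 + ‖z‖) ^ (-(2*(n:ℝ)+2))) :=
        lintegral_const_mul _ (by fun_prop)
    _ < ∞ := by
        apply ENNReal.mul_lt_top ENNReal.ofReal_lt_top
        apply finite_integral_one_add_norm
        rw [finrank_euclideanSpace_fin]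
        linarith [Nat.cast_nonneg (α := ℝ) n]

lemma aux_scaling (n : ℕ) (d : ℝ) (hd : 0 < d) :
    (∫⁻ z : Rn n, Set.indicator {z : Rn n | d ≤ ‖z‖}
      (fun z => ENNReal.ofReal (‖z‖ ^ (-(2*(n:ℝ)+2)))) z)
    = ENNReal.ofReal (d ^ (-(n:ℝ)-2)) *
      ∫⁻ z : Rn n, Set.indicator {z : Rn n | 1 ≤ ‖z‖}
        (fun z => ENNReal.ofReal (‖z‖ ^ (-(2*(n:ℝ)+2)))) z := by
  have hd' : d ≠ 0 := hd.ne'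
  set F1 : Rn n → ℝ≥0∞ := fun z => Set.indicator {z : Rn n | 1 ≤ ‖z‖}
      (fun z => ENNReal.ofReal (‖z‖ ^ (-(2*(n:ℝ)+2)))) z with hF1
  have hF1m : Measurable F1 := by
    apply Measurable.indicator
    · fun_prop
    · exact measurableSet_le measurable_const measurable_norm
  have hpt : ∀ z : Rn n, Set.indicator {z : Rn n | d ≤ ‖z‖}
      (fun z => ENNReal.ofReal (‖z‖ ^ (-(2*(n:ℝ)+2)))) z
      = ENNReal.ofReal (d ^ (-(2*(n:ℝ)+2))) * F1 (d⁻¹ • z) := by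
    intro z
    have hnorm : ‖d⁻¹ • z‖ = d⁻¹ * ‖z‖ := by
      rw [norm_smul, Real.norm_eq_abs, abs_inv, abs_of_pos hd]
    have hmem : (d ≤ ‖z‖) ↔ (1:ℝ) ≤ ‖d⁻¹ • z‖ := by
      rw [hnorm]
      constructor
      · intro h
        have := mul_le_mul_of_nonneg_left h (inv_nonneg.2 hd.le)
        rwa [inv_mul_cancel₀ hd'] at this
      · intro h
        have := mul_le_mul_of_nonneg_left h hd.le
        rwa [mul_one, ← mul_assoc, mul_inv_cancel₀ hd', one_mul] at this
    by_cases hz : d ≤ ‖z‖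
    · have hz1 : z ∈ {z : Rn n | d ≤ ‖z‖} := hz
      have hz2 : d⁻¹ • z ∈ {z : Rn n | 1 ≤ ‖z‖} := hmem.1 hz
      simp only [hF1, Set.indicator_of_mem hz1, Set.indicator_of_mem hz2, hnorm]
      have hz0 : (0:ℝ) < ‖z‖ := lt_of_lt_of_le hd hz
      rw [Real.mul_rpow (inv_nonneg.2 hd.le) hz0.le, ← ENNReal.ofReal_mul (by positivity),
        ← mul_assoc, Real.inv_rpow hd.le, ← Real.rpow_neg hd.le, ← Real.rpow_add hd,
        show (-(2*(n:ℝ)+2)) + -(-(2*(n:ℝ)+2)) = 0 by ring, Real.rpow_zero, one_mul]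
    · have hz1 : z ∉ {z : Rn n | d ≤ ‖z‖} := hz
      have hz2 : d⁻¹ • z ∉ {z : Rn n | 1 ≤ ‖z‖} := fun h => hz (hmem.2 h)
      simp only [hF1, Set.indicator_of_notMem hz1, Set.indicator_of_notMem hz2, mul_zero]
  calc (∫⁻ z : Rn n, Set.indicator {z : Rn n | d ≤ ‖z‖}
        (fun z => ENNReal.ofReal (‖z‖ ^ (-(2*(n:ℝ)+2)))) z)
      = ∫⁻ z : Rn n, ENNReal.ofReal (d ^ (-(2*(n:ℝ)+2))) * F1 (d⁻¹ • z) := by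
        exact lintegral_congr hpt
    _ = ENNReal.ofReal (d ^ (-(2*(n:ℝ)+2))) * ∫⁻ z : Rn n, F1 (d⁻¹ • z) := by
        exact lintegral_const_mul _ (hF1m.comp (measurable_const_smul _))
    _ = ENNReal.ofReal (d ^ (-(2*(n:ℝ)+2))) * (ENNReal.ofReal (d ^ (n:ℕ)) * ∫⁻ z, F1 z) := by
        congr 1
        rw [← lintegral_map hF1m (measurable_const_smul _),
          Measure.map_addHaar_smul _ (inv_ne_zero hd'), lintegral_smul_measure]
        congr 2
        rw [finrank_euclideanSpace_fin]
        simp [inv_pow, abs_inv, abs_of_pos (pow_pos hd n)]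
    _ = ENNReal.ofReal (d ^ (-(n:ℝ)-2)) * ∫⁻ z, F1 z := by
        rw [← mul_assoc, ← ENNReal.ofReal_mul (by positivity)]
        congr 2
        rw [← Real.rpow_natCast d n, ← Real.rpow_add hd]
        ring_nf

lemma aux_ksq (n : ℕ) (C₀ s r : ℝ) (hs : 0 < s) (hr : Real.sqrt s ≤ r) :
    (C₀ * s ^ (-(n:ℝ)/2) * ((Real.sqrt s)⁻¹ * r) ^ (-(n:ℝ)-1))^2
      = C₀^2 * s * r ^ (-(2*(n:ℝ)+2)) := by
  have hss : 0 < Real.sqrt s := Real.sqrt_pos.2 hs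
  have hr0 : 0 < r := lt_of_lt_of_le hss hr
  have h1 : (s ^ (-(n:ℝ)/2))^2 = s ^ (-(n:ℝ)) := by
    rw [← Real.rpow_natCast (s ^ (-(n:ℝ)/2)) 2, ← Real.rpow_mul hs.le]
    norm_num
  have h2 : (((Real.sqrt s)⁻¹ * r) ^ (-(n:ℝ)-1))^2
      = ((Real.sqrt s)⁻¹)^(-(2*(n:ℝ)+2)) * r ^ (-(2*(n:ℝ)+2)) := by
    rw [← Real.rpow_natCast (((Real.sqrt s)⁻¹ * r) ^ (-(n:ℝ)-1)) 2,
      ← Real.rpow_mul (by positivity), Real.mul_rpow (by positivity) hr0.le]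
    norm_num
    ring_nf
  have h3 : ((Real.sqrt s)⁻¹)^(-(2*(n:ℝ)+2)) = s ^ ((n:ℝ)+1) := by
    rw [Real.inv_rpow (Real.sqrt_nonneg s), ← Real.rpow_neg (Real.sqrt_nonneg s),
      Real.sqrt_eq_rpow, ← Real.rpow_mul hs.le]
    ring_nf
  have h4 : s ^ (-(n:ℝ)) * s ^ ((n:ℝ)+1) = s := by
    rw [← Real.rpow_add hs]; norm_num
  calc (C₀ * s ^ (-(n:ℝ)/2) * ((Real.sqrt s)⁻¹ * r) ^ (-(n:ℝ)-1))^2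
      = C₀^2 * (s ^ (-(n:ℝ)/2))^2 * (((Real.sqrt s)⁻¹ * r) ^ (-(n:ℝ)-1))^2 := by ring
    _ = C₀^2 * (s ^ (-(n:ℝ)) * s ^ ((n:ℝ)+1)) * r ^ (-(2*(n:ℝ)+2)) := by
        rw [h1, h2, h3]; ring
    _ = C₀^2 * s * r ^ (-(2*(n:ℝ)+2)) := by rw [h4]

lemma aux_const (n : ℕ) (C₀ s d J : ℝ) (hC₀ : 0 ≤ C₀) (hs : 0 < s) (hd : 0 < d) (hJ : 0 ≤ J) :
    (C₀^2 * s * d ^ (-(n:ℝ)-2) * J) ^ ((1:ℝ)/2)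
      = C₀ * Real.sqrt J * s ^ (-(n:ℝ)/4) * ((Real.sqrt s)⁻¹ * d) ^ (-(n:ℝ)/2-1) := by
  have hss : 0 < Real.sqrt s := Real.sqrt_pos.2 hs
  have hL : (C₀^2 * s * d ^ (-(n:ℝ)-2) * J) ^ ((1:ℝ)/2)
      = C₀ * s ^ ((1:ℝ)/2) * d ^ ((-(n:ℝ)-2)/2) * Real.sqrt J := by
    rw [Real.mul_rpow (by positivity) hJ, Real.mul_rpow (by positivity) (by positivity),
      Real.mul_rpow (by positivity) hs.le, ← Real.rpow_natCast C₀ 2, ← Real.rpow_mul hC₀,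
      ← Real.rpow_mul hd.le, Real.sqrt_eq_rpow]
    rw [show ((2:ℕ):ℝ) * (1/2) = 1 by norm_num, Real.rpow_one,
      show (-(n:ℝ)-2) * (1/2) = (-(n:ℝ)-2)/2 by ring]
  have hR : ((Real.sqrt s)⁻¹ * d) ^ (-(n:ℝ)/2-1)
      = s ^ ((n:ℝ)/4 + 1/2) * d ^ (-(n:ℝ)/2-1) := by
    rw [Real.mul_rpow (by positivity) hd.le, Real.inv_rpow (Real.sqrt_nonneg s),
      ← Real.rpow_neg (Real.sqrt_nonneg s), Real.sqrt_eq_rpow, ← Real.rpow_mul hs.le]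
    ring_nf
  rw [hL, hR]
  rw [show (-(n:ℝ)-2)/2 = -(n:ℝ)/2-1 by ring]
  rw [show C₀ * Real.sqrt J * s ^ (-(n:ℝ)/4) * (s ^ ((n:ℝ)/4 + 1/2) * d ^ (-(n:ℝ)/2-1))
      = C₀ * (s ^ (-(n:ℝ)/4) * s ^ ((n:ℝ)/4 + 1/2)) * d ^ (-(n:ℝ)/2-1) * Real.sqrt J by ring,
    ← Real.rpow_add hs, show -(n:ℝ)/4 + ((n:ℝ)/4 + 1/2) = 1/2 by ring]
/-- Pointwise kernel decay implies `L²`–`L^∞` off-diagonal estimates: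
if `|k(x)| ≤ C₀ s^{-n/2}(s^{-1/2}|x|)^{-n-1}` for `|x| ≥ s^{1/2}`, then for Borel sets
`E, E'` with `dist(E,E') ≥ s^{1/2}` and `f ∈ L²`,
`ess sup_{x∈E} |∫ k(x-y) 1_E'(y) f(y) dy| ≤ C s^{-n/4}(s^{-1/2}dist(E,E'))^{-n/2-1}‖f‖_2`,
with `C` depending only on `n` and `C₀`. -/
theorem kernel_decay_implies_offdiagonal (n : ℕ) (hn : 1 ≤ n) (C₀ : ℝ) (hC₀ : 0 < C₀) :
    ∃ C > (0 : ℝ), ∀ s > (0 : ℝ), ∀ k : Rn n → ℂ, Measurable k →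
      (∀ x : Rn n, Real.sqrt s ≤ ‖x‖ →
        ‖k x‖ ≤ C₀ * s ^ (-(n : ℝ) / 2) * ((Real.sqrt s)⁻¹ * ‖x‖) ^ (-(n : ℝ) - 1)) →
      ∀ E E' : Set (Rn n), MeasurableSet E → MeasurableSet E' →
        ENNReal.ofReal (Real.sqrt s) ≤ setEDist E E' →
        ∀ f : Rn n → ℂ, MemLp f 2 volume →
          ∀ᵐ x ∂volume.restrict E,
            ‖∫ y : Rn n, k (x - y) * E'.indicator f y‖ ≤
              C * s ^ (-(n : ℝ) / 4) *
                ((Real.sqrt s)⁻¹ * (setEDist E E').toReal) ^ (-(n : ℝ) / 2 - 1) *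
                (eLpNorm f 2 volume).toReal := by
  classical
  set I : ℝ≥0∞ := ∫⁻ z : Rn n, Set.indicator {z : Rn n | 1 ≤ ‖z‖}
      (fun z => ENNReal.ofReal (‖z‖ ^ (-(2*(n:ℝ)+2)))) z with hIdef
  have hI : I < ∞ := aux_I_lt_top n
  set J : ℝ := I.toReal + 1 with hJdef
  have hJ0 : (0:ℝ) < J := by positivity
  have hIJ : I ≤ ENNReal.ofReal J := by
    calc I = ENNReal.ofReal I.toReal := (ENNReal.ofReal_toReal hI.ne).symm
      _ ≤ _ := ENNReal.ofReal_le_ofReal (by rw [hJdef]; linarith)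
  refine ⟨C₀ * Real.sqrt J, by positivity, ?_⟩
  intro s hs k hk hkbd E E' hE hE' hdist f hf
  have hss : 0 < Real.sqrt s := Real.sqrt_pos.2 hs
  have hRHS0 : 0 ≤ C₀ * Real.sqrt J * s ^ (-(n:ℝ)/4) *
      ((Real.sqrt s)⁻¹ * (setEDist E E').toReal) ^ (-(n:ℝ)/2-1) *
      (eLpNorm f 2 volume).toReal := by
    have h1 : (0:ℝ) ≤ ((Real.sqrt s)⁻¹ * (setEDist E E').toReal) ^ (-(n:ℝ)/2-1) :=
      Real.rpow_nonneg (mul_nonneg (by positivity) ENNReal.toReal_nonneg) _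
    have h2 : (0:ℝ) ≤ s ^ (-(n:ℝ)/4) := Real.rpow_nonneg hs.le _
    have h3 : (0:ℝ) ≤ C₀ * Real.sqrt J := by positivity
    exact mul_nonneg (mul_nonneg (mul_nonneg h3 h2) h1) ENNReal.toReal_nonneg
  rcases Set.eq_empty_or_nonempty E with hEe | ⟨x₀, hx₀⟩
  · rw [hEe, Measure.restrict_empty]
    simp
  rcases Set.eq_empty_or_nonempty E' with hE'e | ⟨y₀, hy₀⟩
  · apply ae_restrict_of_forall_mem hE
    intro x _
    rw [hE'e] at hRHS0 ⊢
    simpa [Set.indicator_empty] using hRHS0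
  have hDne : setEDist E E' ≠ ∞ := by
    apply ne_of_lt
    have h1 : setEDist E E' ≤ ⨅ y ∈ E', edist x₀ y := iInf₂_le x₀ hx₀
    have h2 : (⨅ y ∈ E', edist x₀ y) ≤ edist x₀ y₀ := iInf₂_le y₀ hy₀
    exact lt_of_le_of_lt (h1.trans h2) (edist_lt_top _ _)
  set d : ℝ := (setEDist E E').toReal with hddef
  have hsd : Real.sqrt s ≤ d := by
    have := ENNReal.toReal_mono hDne hdist
    rwa [ENNReal.toReal_ofReal (Real.sqrt_nonneg s)] at this
  have hd0 : 0 < d := lt_of_lt_of_le hss hsd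
  apply ae_restrict_of_forall_mem hE
  intro x hx
  have hxy : ∀ y ∈ E', d ≤ ‖x - y‖ := by
    intro y hy
    have h1 : setEDist E E' ≤ edist x y :=
      le_trans (iInf₂_le x hx) (iInf₂_le y hy)
    have := ENNReal.toReal_mono (edist_ne_top x y) h1
    rwa [edist_dist, ENNReal.toReal_ofReal dist_nonneg, dist_eq_norm] at this
  set A : Rn n → ℝ≥0∞ := fun y => (‖Set.indicator E' (fun y => k (x - y)) y‖₊ : ℝ≥0∞) with hA
  set B : Rn n → ℝ≥0∞ := fun y => (‖f y‖₊ : ℝ≥0∞) with hB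
  have hAm : Measurable A := ((hk.comp (measurable_id.const_sub x)).indicator hE').enorm
  have hBm : AEMeasurable B volume := hf.aestronglyMeasurable.enorm
  set M : ℝ := C₀^2 * s * d ^ (-(n:ℝ)-2) * J with hM
  have hM0 : 0 ≤ M := by
    rw [hM]
    have := Real.rpow_nonneg hd0.le (-(n:ℝ)-2)
    positivity
  -- pointwise bound reducing to the product A * B
  have hpt0 : ∀ y, ENNReal.ofReal ‖k (x - y) * E'.indicator f y‖ ≤ A y * B y := by
    intro y
    by_cases hy : y ∈ E'
    · simp only [hA, hB, Set.indicator_of_mem hy]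
      rw [norm_mul, ← enorm_eq_nnnorm, ← enorm_eq_nnnorm, ← ofReal_norm, ← ofReal_norm,
        ← ENNReal.ofReal_mul (norm_nonneg _)]
    · simp [hA, hB, Set.indicator_of_notMem hy]
  -- the kernel square bound
  have hpoint : ∀ y, A y ^ (2:ℝ) ≤ ENNReal.ofReal (C₀^2*s) *
      Set.indicator {z : Rn n | d ≤ ‖z‖} (fun z => ENNReal.ofReal (‖z‖ ^ (-(2*(n:ℝ)+2)))) (x - y) := by
    intro y
    by_cases hy : y ∈ E'
    · have hd_le : d ≤ ‖x - y‖ := hxy y hy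
      have hs_le : Real.sqrt s ≤ ‖x - y‖ := hsd.trans hd_le
      have hmem : x - y ∈ {z : Rn n | d ≤ ‖z‖} := hd_le
      have hAy : A y = ENNReal.ofReal ‖k (x - y)‖ := by
        simp only [hA, Set.indicator_of_mem hy, ofReal_norm, enorm_eq_nnnorm]
      rw [hAy, Set.indicator_of_mem hmem,
        ENNReal.ofReal_rpow_of_nonneg (norm_nonneg _) (by norm_num : (0:ℝ) ≤ 2),
        ← ENNReal.ofReal_mul (by positivity)]
      apply ENNReal.ofReal_le_ofReal
      have hbd := hkbd (x - y) hs_le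
      calc ‖k (x - y)‖ ^ (2:ℝ)
          = ‖k (x - y)‖ ^ (2:ℕ) := by
            rw [show (2:ℝ) = ((2:ℕ):ℝ) by norm_num, Real.rpow_natCast]
        _ ≤ (C₀ * s ^ (-(n:ℝ)/2) * ((Real.sqrt s)⁻¹ * ‖x - y‖) ^ (-(n:ℝ)-1))^2 :=
            pow_le_pow_left₀ (norm_nonneg _) hbd 2
        _ = C₀^2 * s * ‖x - y‖ ^ (-(2*(n:ℝ)+2)) := aux_ksq n C₀ s _ hs hs_le
    · have hAy : A y = 0 := by simp [hA, Set.indicator_of_notMem hy]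
      rw [hAy, ENNReal.zero_rpow_of_pos (by norm_num)]
      exact zero_le
  -- the L² bound on the kernel part
  have hA2 : (∫⁻ y, A y ^ (2:ℝ)) ≤ ENNReal.ofReal M := by
    calc (∫⁻ y, A y ^ (2:ℝ))
        ≤ ∫⁻ y, ENNReal.ofReal (C₀^2*s) *
            Set.indicator {z : Rn n | d ≤ ‖z‖}
              (fun z => ENNReal.ofReal (‖z‖ ^ (-(2*(n:ℝ)+2)))) (x - y) :=
          lintegral_mono hpoint
      _ = ENNReal.ofReal (C₀^2*s) * ∫⁻ y, Set.indicator {z : Rn n | d ≤ ‖z‖}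
              (fun z => ENNReal.ofReal (‖z‖ ^ (-(2*(n:ℝ)+2)))) (x - y) :=
          lintegral_const_mul _ ((aux_F1_meas n d).comp
            (show Measurable fun y : Rn n => x - y by fun_prop))
      _ = ENNReal.ofReal (C₀^2*s) * ∫⁻ z, Set.indicator {z : Rn n | d ≤ ‖z‖}
              (fun z => ENNReal.ofReal (‖z‖ ^ (-(2*(n:ℝ)+2)))) z := by
          congr 1
          rw [← lintegral_map (aux_F1_meas n d)
              (show Measurable fun y : Rn n => x - y by fun_prop),
            Measure.map_sub_left_eq_self volume x]
      _ = ENNReal.ofReal (C₀^2*s) * (ENNReal.ofReal (d ^ (-(n:ℝ)-2)) * I) := by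
          rw [aux_scaling n d hd0]
      _ ≤ ENNReal.ofReal (C₀^2*s) * (ENNReal.ofReal (d ^ (-(n:ℝ)-2)) * ENNReal.ofReal J) := by
          exact mul_le_mul_right (mul_le_mul_right hIJ _) _
      _ = ENNReal.ofReal M := by
          rw [← ENNReal.ofReal_mul (Real.rpow_nonneg hd0.le _),
            ← ENNReal.ofReal_mul (by positivity), hM]
          ring_nf
  have hA2' : (∫⁻ y, A y ^ (2:ℝ)) ^ ((1:ℝ)/2) ≤ ENNReal.ofReal (M ^ ((1:ℝ)/2)) := by
    calc (∫⁻ y, A y ^ (2:ℝ)) ^ ((1:ℝ)/2)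
        ≤ (ENNReal.ofReal M) ^ ((1:ℝ)/2) := ENNReal.rpow_le_rpow hA2 (by norm_num)
      _ = ENNReal.ofReal (M ^ ((1:ℝ)/2)) := ENNReal.ofReal_rpow_of_nonneg hM0 (by norm_num)
  have hB2 : (∫⁻ y, B y ^ (2:ℝ)) ^ ((1:ℝ)/2) = eLpNorm f 2 volume := by
    rw [eLpNorm_eq_lintegral_rpow_enorm_toReal (by norm_num) (by norm_num)]
    norm_num [enorm_eq_nnnorm]
    rfl
  have hH : (∫⁻ y, A y * B y) ≤
      (∫⁻ y, A y ^ (2:ℝ)) ^ ((1:ℝ)/2) * (∫⁻ y, B y ^ (2:ℝ)) ^ ((1:ℝ)/2) := by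
    have := ENNReal.lintegral_mul_le_Lp_mul_Lq volume
      Real.HolderConjugate.two_two hAm.aemeasurable hBm
    simpa using this
  have key : (∫⁻ y, ENNReal.ofReal ‖k (x - y) * E'.indicator f y‖) ≤
      ENNReal.ofReal (M ^ ((1:ℝ)/2)) * eLpNorm f 2 volume := by
    calc (∫⁻ y, ENNReal.ofReal ‖k (x - y) * E'.indicator f y‖)
        ≤ ∫⁻ y, A y * B y := lintegral_mono hpt0
      _ ≤ (∫⁻ y, A y ^ (2:ℝ)) ^ ((1:ℝ)/2) * (∫⁻ y, B y ^ (2:ℝ)) ^ ((1:ℝ)/2) := hH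
      _ ≤ ENNReal.ofReal (M ^ ((1:ℝ)/2)) * eLpNorm f 2 volume := by
          rw [hB2]
          exact mul_le_mul_left hA2' _
  have hfin : ENNReal.ofReal (M ^ ((1:ℝ)/2)) * eLpNorm f 2 volume ≠ ∞ :=
    ENNReal.mul_ne_top ENNReal.ofReal_ne_top hf.eLpNorm_ne_top
  calc ‖∫ y, k (x - y) * E'.indicator f y‖
      ≤ (∫⁻ y, ENNReal.ofReal ‖k (x - y) * E'.indicator f y‖).toReal :=
        norm_integral_le_lintegral_norm _
    _ ≤ (ENNReal.ofReal (M ^ ((1:ℝ)/2)) * eLpNorm f 2 volume).toReal :=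
        ENNReal.toReal_mono hfin key
    _ = M ^ ((1:ℝ)/2) * (eLpNorm f 2 volume).toReal := by
        rw [ENNReal.toReal_mul, ENNReal.toReal_ofReal (Real.rpow_nonneg hM0 _)]
    _ = C₀ * Real.sqrt J * s ^ (-(n:ℝ)/4) * ((Real.sqrt s)⁻¹ * d) ^ (-(n:ℝ)/2-1) *
        (eLpNorm f 2 volume).toReal := by
        rw [hM, aux_const n C₀ s d J hC₀.le hs hd0 hJ0.le]
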